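/- For any dyadic rational x₀ = k/2^n in [0,1) and any y in [0,1], τ(x₀ + y/2^n) = τ(x₀) + (1/2^n)·(τ(y) + D_n(x₀)·y), where D_n(x₀) = n − 2·(sum of the first n binary digits of x₀). -/

import Mathlib

open scoped BigOperators

/-- Distance from a real number to the nearest integer. -/
noncomputable def nearestDist (t : ℝ) : ℝ := |t - round t|

/-- The Takagi function. -/
noncomputable def takagi (x : ℝ) : ℝ := ∑' n : ℕ, (1 / 2 ^ n) * nearestDist (2 ^ n * x)

/-- Partial Takagi function of level `n`. -/
noncomputable def takagiPartial (n : ℕ) (x : ℝ) : ℝ :=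
  ∑ j ∈ Finset.range n, (1 / 2 ^ j) * nearestDist (2 ^ j * x)

/-- The symmetric tent map. -/
noncomputable def tent (x : ℝ) : ℝ := if x ≤ 1 / 2 then 2 * x else 2 - 2 * x

lemma nd_nonneg (t : ℝ) : 0 ≤ nearestDist t := abs_nonneg _

lemma nd_le_half (t : ℝ) : nearestDist t ≤ 1 / 2 := abs_sub_round t

lemma nd_add_int (x : ℝ) (m : ℤ) : nearestDist (x + m) = nearestDist x := by
  unfold nearestDist
  rw [round_add_intCast]
  push_cast
  congr 1
  ring

lemma nd_int (m : ℤ) : nearestDist (m : ℝ) = 0 := by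
  unfold nearestDist
  rw [round_intCast, sub_self, abs_zero]

lemma nd_left {t : ℝ} (h0 : 0 ≤ t) (h : t ≤ 1 / 2) : nearestDist t = t := by
  rcases eq_or_lt_of_le h with rfl | h
  · unfold nearestDist
    norm_num [round_eq]
  · have : round t = 0 := by
      rw [round_eq, Int.floor_eq_iff]
      constructor <;> push_cast <;> linarith
    unfold nearestDist
    rw [this]
    push_cast
    rw [sub_zero, abs_of_nonneg h0]

lemma nd_right {t : ℝ} (h0 : 1 / 2 ≤ t) (h : t ≤ 1) : nearestDist t = 1 - t := by
  have : round t = 1 := by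
    rw [round_eq, Int.floor_eq_iff]
    constructor <;> push_cast <;> linarith
  unfold nearestDist
  rw [this]
  push_cast
  rw [abs_of_nonpos (by linarith)]
  ring

lemma takagi_summable (x : ℝ) :
    Summable (fun m : ℕ => (1 / 2 ^ m : ℝ) * nearestDist (2 ^ m * x)) := by
  refine Summable.of_nonneg_of_le
    (fun m => mul_nonneg (by positivity) (nd_nonneg _)) (fun m => ?_) summable_geometric_two
  calc (1 / 2 ^ m : ℝ) * nearestDist (2 ^ m * x)
      ≤ (1 / 2 ^ m : ℝ) * 1 :=
        mul_le_mul_of_nonneg_left ((nd_le_half _).trans (by norm_num)) (by positivity)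
    _ = (1 / 2 : ℝ) ^ m := by rw [mul_one, div_pow, one_pow]

lemma takagi_split (n : ℕ) (x : ℝ) :
    takagi x = takagiPartial n x
      + ∑' m : ℕ, (1 / 2 ^ (m + n) : ℝ) * nearestDist (2 ^ (m + n) * x) := by
  rw [takagi, takagiPartial, ← Summable.sum_add_tsum_nat_add n (takagi_summable x)]

lemma key (i r : ℕ) (hi : 0 < i) (hr : r < 2 ^ i) {y : ℝ} (hy0 : 0 ≤ y) (hy1 : y ≤ 1) :
    nearestDist (((r : ℝ) + y) / 2 ^ i)
      = nearestDist ((r : ℝ) / 2 ^ i)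
        + (1 - 2 * ((r / 2 ^ (i - 1) % 2 : ℕ) : ℝ)) * (y / 2 ^ i) := by
  obtain ⟨j, rfl⟩ : ∃ j, i = j + 1 := ⟨i - 1, (Nat.succ_pred_eq_of_pos hi).symm⟩
  simp only [Nat.add_sub_cancel]
  have h2j : (0 : ℝ) < 2 ^ j := by positivity
  have hpow : (2 : ℝ) ^ (j + 1) = 2 ^ j * 2 := pow_succ 2 j
  have h2 : (0 : ℝ) < 2 ^ (j + 1) := by positivity
  rcases Nat.lt_or_ge r (2 ^ j) with h | h
  · have hb : r / 2 ^ j % 2 = 0 := by rw [Nat.div_eq_of_lt h]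
    have hrR : (r : ℝ) + 1 ≤ 2 ^ j := by exact_mod_cast Nat.succ_le_of_lt h
    rw [hb]
    rw [nd_left (by positivity) (by rw [div_le_iff₀ h2]; nlinarith),
        nd_left (by positivity) (by rw [div_le_iff₀ h2]; nlinarith)]
    push_cast
    ring
  · have hb : r / 2 ^ j % 2 = 1 := by
      have h1 : r / 2 ^ j = 1 := by
        apply Nat.div_eq_of_lt_le (by simpa using h)
        have : (2 : ℕ) ^ (j + 1) = 2 ^ j * 2 := pow_succ 2 j
        omega
      rw [h1]
    have hrR : (2 : ℝ) ^ j ≤ r := by exact_mod_cast h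
    have hrR' : (r : ℝ) + 1 ≤ 2 ^ (j + 1) := by exact_mod_cast Nat.succ_le_of_lt hr
    rw [hb]
    rw [nd_right (by rw [le_div_iff₀ h2]; nlinarith) (by rw [div_le_one h2]; nlinarith),
        nd_right (by rw [le_div_iff₀ h2]; nlinarith) (by rw [div_le_one h2]; nlinarith)]
    push_cast
    ring

lemma bit_mod (i k : ℕ) (hi : 0 < i) :
    k % 2 ^ i / 2 ^ (i - 1) % 2 = k / 2 ^ (i - 1) % 2 := by
  obtain ⟨j, rfl⟩ : ∃ j, i = j + 1 := ⟨i - 1, (Nat.succ_pred_eq_of_pos hi).symm⟩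
  simp only [Nat.add_sub_cancel, pow_succ]
  rw [Nat.mod_mul_right_div_self]
  exact Nat.mod_mod_of_dvd _ dvd_rfl

lemma term_eq (n k m : ℕ) (hm : m < n) {y : ℝ} (hy0 : 0 ≤ y) (hy1 : y ≤ 1) :
    (1 / 2 ^ m : ℝ) * nearestDist (2 ^ m * (((k : ℝ) + y) / 2 ^ n))
      = (1 / 2 ^ m : ℝ) * nearestDist (2 ^ m * ((k : ℝ) / 2 ^ n))
        + (1 - 2 * ((k / 2 ^ (n - 1 - m) % 2 : ℕ) : ℝ)) * (y / 2 ^ n) := by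
  have hi0 : 0 < n - m := Nat.sub_pos_of_lt hm
  set i := n - m with hi
  have hmi : m + i = n := by omega
  have hpow : (2 : ℝ) ^ m * 2 ^ i = 2 ^ n := by rw [← pow_add, hmi]
  have h2i : (0 : ℝ) < 2 ^ i := by positivity
  have h2m : (0 : ℝ) < 2 ^ m := by positivity
  have e1 : (2 : ℝ) ^ m * (((k : ℝ) + y) / 2 ^ n) = ((k : ℝ) + y) / 2 ^ i := by
    rw [← hpow]; field_simp
  have e2 : (2 : ℝ) ^ m * ((k : ℝ) / 2 ^ n) = (k : ℝ) / 2 ^ i := by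
    rw [← hpow]; field_simp
  rw [e1, e2]
  set r := k % 2 ^ i with hr
  set s := k / 2 ^ i with hs
  have hk : k = 2 ^ i * s + r := (Nat.div_add_mod k (2 ^ i)).symm
  have hrlt : r < 2 ^ i := Nat.mod_lt _ (by positivity)
  have eK : (k : ℝ) = 2 ^ i * s + r := by exact_mod_cast congrArg (Nat.cast : ℕ → ℝ) hk
  have e3 : ((k : ℝ) + y) / 2 ^ i = ((r : ℝ) + y) / 2 ^ i + (s : ℤ) := by
    rw [eK]; push_cast; field_simp; ring
  have e4 : (k : ℝ) / 2 ^ i = ((r : ℝ) + 0) / 2 ^ i + (s : ℤ) := by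
    rw [eK]; push_cast; field_simp; ring
  have hbit : r / 2 ^ (i - 1) % 2 = k / 2 ^ (n - 1 - m) % 2 := by
    have hi1 : n - 1 - m = i - 1 := by omega
    rw [hi1, hr, bit_mod i k hi0]
  have e5 : (1 / 2 ^ m : ℝ) * (y / 2 ^ i) = y / 2 ^ n := by
    rw [← hpow]; field_simp
  rw [e3, e4, nd_add_int, nd_add_int, key i r hi0 hrlt hy0 hy1, add_zero, hbit, mul_add]
  congr 1
  rw [← e5]
  ring

lemma digit_sum : ∀ n k : ℕ, k < 2 ^ n →
    (Nat.digits 2 k).sum = ∑ j ∈ Finset.range n, k / 2 ^ j % 2 := by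
  intro n
  induction n with
  | zero => intro k hk; interval_cases k; simp
  | succ n ih =>
    intro k hk
    rcases Nat.eq_zero_or_pos k with rfl | hk0
    · simp
    · rw [Nat.digits_def' (by norm_num) hk0]
      have hk2 : k / 2 < 2 ^ n := by
        have : (2 : ℕ) ^ (n + 1) = 2 ^ n * 2 := pow_succ 2 n
        omega
      rw [List.sum_cons, ih _ hk2, Finset.sum_range_succ']
      rw [Finset.sum_congr rfl
        (fun j _ => by rw [pow_succ', ← Nat.div_div_eq_div_mul] : ∀ j ∈ Finset.range n,
          k / 2 ^ (j + 1) % 2 = k / 2 / 2 ^ j % 2)]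
      simp only [pow_zero, Nat.div_one]
      omega

lemma partial_eq (n k : ℕ) {y : ℝ} (hk : k < 2 ^ n) (hy0 : 0 ≤ y) (hy1 : y ≤ 1) :
    takagiPartial n (((k : ℝ) + y) / 2 ^ n)
      = takagiPartial n ((k : ℝ) / 2 ^ n)
        + ((n : ℝ) - 2 * (((Nat.digits 2 k).sum : ℕ) : ℝ)) * (y / 2 ^ n) := by
  unfold takagiPartial
  rw [Finset.sum_congr rfl (fun m hm => term_eq n k m (Finset.mem_range.1 hm) hy0 hy1)]
  rw [Finset.sum_add_distrib, ← Finset.sum_mul]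
  congr 1
  have hre : ∑ m ∈ Finset.range n, (1 - 2 * ((k / 2 ^ (n - 1 - m) % 2 : ℕ) : ℝ))
      = ∑ m ∈ Finset.range n, (1 - 2 * ((k / 2 ^ m % 2 : ℕ) : ℝ)) :=
    Finset.sum_range_reflect (fun m => (1 - 2 * ((k / 2 ^ m % 2 : ℕ) : ℝ))) n
  rw [hre, Finset.sum_sub_distrib, ← Finset.mul_sum]
  rw [digit_sum n k hk]
  push_cast
  simp

theorem takagi_self_affine (n k : ℕ) (hk : k < 2 ^ n)
    (y : ℝ) (hy : y ∈ Set.Icc (0:ℝ) 1) :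
    takagi ((k : ℝ) / 2 ^ n + y / 2 ^ n)
      = takagi ((k : ℝ) / 2 ^ n)
        + (1 / 2 ^ n) * (takagi y
            + (((n : ℤ) - 2 * ((Nat.digits 2 k).sum : ℤ) : ℤ) : ℝ) * y) := by
  obtain ⟨hy0, hy1⟩ := hy
  have h2n : (0 : ℝ) < 2 ^ n := by positivity
  have e0 : (k : ℝ) / 2 ^ n + y / 2 ^ n = ((k : ℝ) + y) / 2 ^ n := (add_div _ _ _).symm
  rw [e0]
  have tail1 : ∀ m : ℕ, (1 / 2 ^ (m + n) : ℝ) * nearestDist (2 ^ (m + n) * (((k : ℝ) + y) / 2 ^ n))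
      = (1 / 2 ^ n) * ((1 / 2 ^ m) * nearestDist (2 ^ m * y)) := by
    intro m
    have e1 : (2 : ℝ) ^ (m + n) * (((k : ℝ) + y) / 2 ^ n) = 2 ^ m * y + ((2 ^ m * k : ℤ) : ℝ) := by
      push_cast
      rw [pow_add]
      field_simp
      ring
    rw [e1, nd_add_int, pow_add]
    ring
  have tail2 : ∀ m : ℕ, (1 / 2 ^ (m + n) : ℝ) * nearestDist (2 ^ (m + n) * ((k : ℝ) / 2 ^ n))
      = 0 := by
    intro m
    have e1 : (2 : ℝ) ^ (m + n) * ((k : ℝ) / 2 ^ n) = ((2 ^ m * k : ℤ) : ℝ) := by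
      push_cast
      rw [pow_add]
      field_simp
    rw [e1, nd_int, mul_zero]
  have h1 : takagi (((k : ℝ) + y) / 2 ^ n)
      = takagiPartial n (((k : ℝ) + y) / 2 ^ n) + (1 / 2 ^ n) * takagi y := by
    rw [takagi_split n]
    congr 1
    rw [tsum_congr tail1, tsum_mul_left]
    rfl
  have h2 : takagi ((k : ℝ) / 2 ^ n) = takagiPartial n ((k : ℝ) / 2 ^ n) := by
    rw [takagi_split n ((k : ℝ) / 2 ^ n), tsum_congr tail2, tsum_zero, add_zero]
  have hc : ((((n : ℤ) - 2 * ((Nat.digits 2 k).sum : ℤ) : ℤ)) : ℝ)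
      = (n : ℝ) - 2 * (((Nat.digits 2 k).sum : ℕ) : ℝ) := by
    rw [Int.cast_sub, Int.cast_mul, Int.cast_natCast, Int.cast_natCast]
    norm_num
  rw [h1, h2, partial_eq n k hk hy0 hy1, hc]
  ring
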